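/- arXiv:1510.08739 — 5 statements merged into one kernel-verified Lean document; each statement's English description precedes it below -/
import Mathlib

section
/- For every ε > 0 and every set A ⊆ 𝔽 ⁿ (𝔽 a finite field of prime order p), there exists a subspace V ≤ 𝔽ⁿ with codim V ≪ ε^{-1} (codimension bounded by C·ε^{-1} for an absolute constant C) and an element x ∈ 𝔽ⁿ such that A is ε-uniform on the coset x + V, meaning sup_{r ∉ V^⊥} |(1_A μ_{x+V})^∧(r)| ≤ ε. -/
open scoped Classical
open Finset
noncomputable section

/-- Dot product on `𝔽_pⁿ`. -/
def dotp {p n : ℕ} (r x : Fin n → ZMod p) : ZMod p := ∑ i, r i * x i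

/-- The additive character `t ↦ e^{-2πit/p}` of `𝔽_p`. -/
def chip (p : ℕ) (t : ZMod p) : ℂ :=
  Complex.exp (-(2 * Real.pi * Complex.I) * (t.val : ℂ) / (p : ℂ))

/-- `(1_A μ_{x+V})^∧(r) = |V|⁻¹ ∑_{v ∈ V} 1_A(x+v) e^{-2πi r·(x+v)/p}`. -/
def fcosetp {p n : ℕ} [NeZero p] (A : Set (Fin n → ZMod p)) (x : Fin n → ZMod p)
    (V : Submodule (ZMod p) (Fin n → ZMod p)) (r : Fin n → ZMod p) : ℂ :=
  (∑ v : V, if x + (v : Fin n → ZMod p) ∈ A then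
      chip p (dotp r (x + (v : Fin n → ZMod p))) else 0) / (Fintype.card V)

section Aux
variable {p n : ℕ}

/-! ### Character lemmas -/

def zetap (p : ℕ) : ℂ := Complex.exp (-(2 * Real.pi * Complex.I) / (p : ℂ))

lemma zetap_prim (hp : p ≠ 0) : IsPrimitiveRoot (zetap p) p := by
  have h := (Complex.isPrimitiveRoot_exp p hp).inv
  have : (Complex.exp (2 * Real.pi * Complex.I / p))⁻¹ = zetap p := by
    rw [← Complex.exp_neg, zetap]
    ring_nf
  rwa [this] at h

lemma chip_eq (t : ZMod p) : chip p t = zetap p ^ t.val := by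
  rw [chip, zetap, ← Complex.exp_nat_mul]
  ring_nf

lemma zetap_pow_p (hp : p ≠ 0) : zetap p ^ p = 1 := (zetap_prim hp).pow_eq_one

lemma chip_add [NeZero p] (a b : ZMod p) : chip p (a + b) = chip p a * chip p b := by
  rw [chip_eq, chip_eq, chip_eq, ← pow_add]
  have h : a.val + b.val = (a + b).val + p * ((a.val + b.val) / p) := by
    rw [ZMod.val_add]
    exact (Nat.mod_add_div _ _).symm
  rw [h, pow_add, pow_mul, zetap_pow_p (NeZero.ne p), one_pow, mul_one]

lemma abs_chip (t : ZMod p) : ‖chip p t‖ = 1 := by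
  rw [chip, Complex.norm_exp]
  have : (-(2 * Real.pi * Complex.I) * (t.val : ℂ) / (p : ℂ)).re = 0 := by
    simp [Complex.div_re, Complex.mul_re, Complex.mul_im]
  rw [this, Real.exp_zero]

lemma sum_chip [hp : Fact p.Prime] : ∑ t : ZMod p, chip p t = 0 := by
  have h1 : ∑ t : ZMod p, chip p t = ∑ i ∈ range p, zetap p ^ i := by
    simp_rw [chip_eq]
    exact Finset.sum_nbij' (fun t => t.val) (fun i => (i : ZMod p))
      (fun t _ => mem_range.mpr (ZMod.val_lt t)) (fun i _ => mem_univ _)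
      (fun t _ => by simp [ZMod.natCast_val, ZMod.cast_id])
      (fun i hi => ZMod.val_natCast_of_lt (mem_range.mp hi)) (fun t _ => rfl)
  rw [h1]
  exact (zetap_prim hp.out.ne_zero).geom_sum_eq_zero hp.out.one_lt

/-! ### Linearity of the dot product -/

lemma dotp_add_right (r x y : Fin n → ZMod p) : dotp r (x + y) = dotp r x + dotp r y := by
  simp [dotp, mul_add, Finset.sum_add_distrib]

lemma dotp_smul_right (r x : Fin n → ZMod p) (t : ZMod p) : dotp r (t • x) = t * dotp r x := by
  simp [dotp, Finset.mul_sum, mul_assoc, mul_left_comm]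

lemma dotp_sub_right (r x y : Fin n → ZMod p) : dotp r (x - y) = dotp r x - dotp r y := by
  simp [dotp, mul_sub, Finset.sum_sub_distrib]

def dlin (r : Fin n → ZMod p) : (Fin n → ZMod p) →ₗ[ZMod p] ZMod p where
  toFun := dotp r
  map_add' := dotp_add_right r
  map_smul' := fun t x => by simp [dotp_smul_right]

/-! ### Density -/

def densA [NeZero p] (A : Set (Fin n → ZMod p)) (x : Fin n → ZMod p)
    (V : Submodule (ZMod p) (Fin n → ZMod p)) : ℝ :=
  (∑ v : V, if x + (v : Fin n → ZMod p) ∈ A then (1:ℝ) else 0) / (Fintype.card V)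

lemma densA_nonneg [NeZero p] (A : Set (Fin n → ZMod p)) (x)
    (V : Submodule (ZMod p) (Fin n → ZMod p)) : 0 ≤ densA A x V := by
  apply div_nonneg _ (by positivity)
  apply Finset.sum_nonneg; intro v _; split <;> norm_num

lemma densA_le_one [NeZero p] (A : Set (Fin n → ZMod p)) (x)
    (V : Submodule (ZMod p) (Fin n → ZMod p)) : densA A x V ≤ 1 := by
  rw [densA, div_le_one (by positivity)]
  calc (∑ v : V, if x + (v : Fin n → ZMod p) ∈ A then (1:ℝ) else 0)
      ≤ ∑ _v : V, (1:ℝ) := by apply Finset.sum_le_sum; intro v _; split <;> norm_num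
    _ = Fintype.card V := by simp

lemma abs_fcosetp_le_one [NeZero p] (A : Set (Fin n → ZMod p)) (x)
    (V : Submodule (ZMod p) (Fin n → ZMod p)) (r) :
    ‖fcosetp A x V r‖ ≤ 1 := by
  rw [fcosetp, norm_div]
  rw [div_le_one (by simp [Complex.norm_natCast]; exact_mod_cast Fintype.card_pos)]
  calc ‖∑ v : V, if x + (v : Fin n → ZMod p) ∈ A then
        chip p (dotp r (x + (v : Fin n → ZMod p))) else 0‖
      ≤ ∑ v : V, ‖if x + (v : Fin n → ZMod p) ∈ A then
        chip p (dotp r (x + (v : Fin n → ZMod p))) else 0‖ := norm_sum_le _ _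
    _ ≤ ∑ _v : V, (1:ℝ) := by
        apply Finset.sum_le_sum; intro v _; split
        · rw [abs_chip]
        · simp
    _ = Fintype.card V := by simp
    _ ≤ ‖(Fintype.card V : ℂ)‖ := by simp [Complex.norm_natCast]

/-! ### Codimension of intersection with a hyperplane -/

lemma finrank_inf_ker [Fact p.Prime] (V : Submodule (ZMod p) (Fin n → ZMod p))
    (r : Fin n → ZMod p) :
    Module.finrank (ZMod p) V ≤
      Module.finrank (ZMod p)
        (V ⊓ LinearMap.ker (dlin r) : Submodule (ZMod p) (Fin n → ZMod p)) + 1 := by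
  have h1 := LinearMap.finrank_range_add_finrank_ker ((dlin r).domRestrict V)
  have h2 : Module.finrank (ZMod p) (LinearMap.range ((dlin r).domRestrict V)) ≤ 1 := by
    simpa using (LinearMap.range ((dlin r).domRestrict V)).finrank_le
  have h3 : Module.finrank (ZMod p) (LinearMap.ker ((dlin r).domRestrict V)) =
      Module.finrank (ZMod p)
        (V ⊓ LinearMap.ker (dlin r) : Submodule (ZMod p) (Fin n → ZMod p)) := by
    rw [LinearMap.ker_domRestrict, ← Submodule.map_comap_subtype,
      Submodule.finrank_map_subtype_eq]
  omega

/-! ### The coset decomposition equivalence -/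

def cosetEquiv [Fact p.Prime] (V : Submodule (ZMod p) (Fin n → ZMod p))
    (r : Fin n → ZMod p) (v₀ : Fin n → ZMod p) (hv₀ : v₀ ∈ V) (hr : dotp r v₀ = 1) :
    ZMod p × (V ⊓ LinearMap.ker (dlin r) : Submodule (ZMod p) (Fin n → ZMod p)) ≃ V where
  toFun z := ⟨z.1 • v₀ + z.2.1, V.add_mem (V.smul_mem z.1 hv₀) z.2.2.1⟩
  invFun v := ⟨dotp r v.1, ⟨v.1 - (dotp r v.1) • v₀,
    ⟨V.sub_mem v.2 (V.smul_mem _ hv₀), by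
      rw [SetLike.mem_coe, LinearMap.mem_ker]
      show dotp r (v.1 - (dotp r v.1) • v₀) = 0
      rw [dotp_sub_right, dotp_smul_right, hr, mul_one, sub_self]⟩⟩⟩
  left_inv := by
    rintro ⟨t, w, hw⟩
    have hw0 : dotp r w = 0 := hw.2
    have h : dotp r (t • v₀ + w) = t := by
      rw [dotp_add_right, dotp_smul_right, hr, mul_one, hw0, add_zero]
    ext
    · exact h
    · simp [h]
  right_inv := by
    rintro ⟨v, hv⟩
    simp

/-! ### The increment lemma -/

lemma increment [Fact p.Prime] (A : Set (Fin n → ZMod p))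
    (V : Submodule (ZMod p) (Fin n → ZMod p)) (x r : Fin n → ZMod p)
    (hr : ∃ v ∈ V, dotp r v ≠ 0) {ε : ℝ} (hε0 : 0 < ε)
    (hε : ε ≤ ‖fcosetp A x V r‖) :
    ∃ (W : Submodule (ZMod p) (Fin n → ZMod p)) (y : Fin n → ZMod p),
      Module.finrank (ZMod p) V ≤ Module.finrank (ZMod p) W + 1 ∧
      densA A x V + ε / 2 ≤ densA A y W := by
  obtain ⟨v₁, hv₁V, hv₁⟩ := hr
  set v₀ := (dotp r v₁)⁻¹ • v₁ with hv₀def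
  have hv₀V : v₀ ∈ V := V.smul_mem _ hv₁V
  have hrv₀ : dotp r v₀ = 1 := by rw [hv₀def, dotp_smul_right, inv_mul_cancel₀ hv₁]
  set W := (V ⊓ LinearMap.ker (dlin r) : Submodule (ZMod p) (Fin n → ZMod p)) with hWdef
  set e := cosetEquiv V r v₀ hv₀V hrv₀ with hedef
  have hp : 0 < p := (Fact.out : p.Prime).pos
  have cardV : (Fintype.card V : ℝ) = p * Fintype.card W := by
    have h := Fintype.card_congr e
    rw [← h, Fintype.card_prod, ZMod.card]
    push_cast; ring
  have cardWpos : (0:ℝ) < Fintype.card W := by exact_mod_cast Fintype.card_pos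
  have cardVpos : (0:ℝ) < Fintype.card V := by exact_mod_cast Fintype.card_pos
  set s : ZMod p → ℝ :=
    fun t => ∑ w : W, if x + (t • v₀ + (w : Fin n → ZMod p)) ∈ A then (1:ℝ) else 0 with hs
  set α := densA A x V with hα
  have hsumdens : ∀ t : ZMod p, densA A (x + t • v₀) W = s t / Fintype.card W := by
    intro t
    simp only [densA, hs]
    congr 1
    apply Finset.sum_congr rfl
    intro w _
    rw [add_assoc]
  have decompR : (∑ v : V, if x + (v : Fin n → ZMod p) ∈ A then (1:ℝ) else 0)
      = ∑ t : ZMod p, s t := by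
    rw [← Equiv.sum_comp e
      (fun v : V => if x + (v : Fin n → ZMod p) ∈ A then (1:ℝ) else 0),
      Fintype.sum_prod_type]
    rfl
  have hαsum : ∑ t : ZMod p, s t = α * (p * Fintype.card W) := by
    rw [← cardV, ← decompR, hα, densA, div_mul_cancel₀ _ (ne_of_gt cardVpos)]
  set m := α * (Fintype.card W : ℝ) with hm
  -- the complex decomposition
  have decompC : (∑ v : V, if x + (v : Fin n → ZMod p) ∈ A then
        chip p (dotp r (x + (v : Fin n → ZMod p))) else 0)
      = chip p (dotp r x) * ∑ t : ZMod p, chip p t * (s t : ℂ) := by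
    rw [← Equiv.sum_comp e (fun v : V => if x + (v : Fin n → ZMod p) ∈ A then
        chip p (dotp r (x + (v : Fin n → ZMod p))) else 0),
      Fintype.sum_prod_type, Finset.mul_sum]
    apply Finset.sum_congr rfl
    intro t _
    have hdot : ∀ w : W, dotp r (x + (t • v₀ + (w : Fin n → ZMod p))) = dotp r x + t := by
      intro w
      have hw0 : dotp r (w : Fin n → ZMod p) = 0 := w.2.2
      rw [dotp_add_right, dotp_add_right, dotp_smul_right, hrv₀, mul_one, hw0, add_zero]
    have hcast : (s t : ℂ)
        = ∑ w : W, if x + (t • v₀ + (w : Fin n → ZMod p)) ∈ A then (1:ℂ) else 0 := by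
      rw [hs]
      push_cast
      apply Finset.sum_congr rfl
      intro w _
      split <;> simp
    calc ∑ w : W, (if x + (t • v₀ + (w : Fin n → ZMod p)) ∈ A then
            chip p (dotp r (x + (t • v₀ + (w : Fin n → ZMod p)))) else 0)
        = ∑ w : W, (chip p (dotp r x) * chip p t) *
            (if x + (t • v₀ + (w : Fin n → ZMod p)) ∈ A then (1:ℂ) else 0) := by
          apply Finset.sum_congr rfl
          intro w _
          rw [hdot w, chip_add]
          split <;> ring
      _ = chip p (dotp r x) * (chip p t * (s t : ℂ)) := by
          rw [← Finset.mul_sum, ← hcast, mul_assoc]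
  -- from uniformity failure to L¹ bound on deviations
  have habs : ε * (p * Fintype.card W) ≤ ∑ t : ZMod p, |s t - m| := by
    have h1 : ‖fcosetp A x V r‖
        = ‖∑ t : ZMod p, chip p t * (s t : ℂ)‖ / (p * Fintype.card W) := by
      rw [fcosetp, norm_div, decompC, norm_mul, abs_chip, one_mul, Complex.norm_natCast, cardV]
    have h3 : ∑ t : ZMod p, chip p t * ((m : ℝ) : ℂ) = 0 := by
      rw [← Finset.sum_mul, sum_chip, zero_mul]
    have h2 : ∑ t : ZMod p, chip p t * (((s t - m : ℝ)) : ℂ)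
        = ∑ t : ZMod p, chip p t * (s t : ℂ) := by
      simp only [Complex.ofReal_sub, mul_sub, Finset.sum_sub_distrib, h3, sub_zero]
    have h4 : ‖∑ t : ZMod p, chip p t * (s t : ℂ)‖ ≤ ∑ t : ZMod p, |s t - m| := by
      rw [← h2]
      refine le_trans (norm_sum_le _ _) ?_
      apply Finset.sum_le_sum
      intro t _
      rw [norm_mul, abs_chip, one_mul, Complex.norm_real, Real.norm_eq_abs]
    have h5 : ε ≤ ‖∑ t : ZMod p, chip p t * (s t : ℂ)‖ / (p * Fintype.card W) := by
      rw [← h1]; exact hε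
    have h6 := (le_div_iff₀ (by positivity)).mp h5
    linarith
  have hmean : ∑ t : ZMod p, (s t - m) = 0 := by
    rw [Finset.sum_sub_distrib, hαsum, Finset.sum_const, Finset.card_univ, ZMod.card,
      nsmul_eq_mul, hm]
    ring
  have hmax : ∀ b : ℝ, max b 0 = (|b| + b) / 2 := by
    intro b
    rcases le_total b 0 with h | h
    · rw [max_eq_right h, abs_of_nonpos h]; ring
    · rw [max_eq_left h, abs_of_nonneg h]; ring
  have hposum : ε * p * Fintype.card W / 2 ≤ ∑ t : ZMod p, max (s t - m) 0 := by
    simp only [hmax]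
    rw [← Finset.sum_div, Finset.sum_add_distrib, hmean, add_zero]
    linarith
  have hexists : ∃ t : ZMod p, ε * Fintype.card W / 2 ≤ max (s t - m) 0 := by
    by_contra hcon
    push_neg at hcon
    have hlt : ∑ t : ZMod p, max (s t - m) 0
        < ∑ _t : ZMod p, ε * Fintype.card W / 2 :=
      Finset.sum_lt_sum_of_nonempty Finset.univ_nonempty (fun t _ => hcon t)
    rw [Finset.sum_const, Finset.card_univ, ZMod.card, nsmul_eq_mul] at hlt
    have : (p:ℝ) * (ε * Fintype.card W / 2) = ε * p * Fintype.card W / 2 := by ring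
    rw [this] at hlt
    linarith
  obtain ⟨t, ht⟩ := hexists
  have htpos : 0 < ε * Fintype.card W / 2 := by positivity
  have hst : m + ε * Fintype.card W / 2 ≤ s t := by
    rcases max_cases (s t - m) 0 with ⟨heq, _⟩ | ⟨heq, _⟩
    · rw [heq] at ht; linarith
    · rw [heq] at ht; linarith
  refine ⟨W, x + t • v₀, finrank_inf_ker V r, ?_⟩
  rw [hsumdens t]
  rw [le_div_iff₀ cardWpos]
  calc (α + ε / 2) * Fintype.card W = m + ε * Fintype.card W / 2 := by rw [hm]; ring
    _ ≤ s t := hst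

/-! ### The iteration -/

lemma key [Fact p.Prime] (A : Set (Fin n → ZMod p)) {ε : ℝ} (hε : 0 < ε) (k : ℕ) :
    ∃ (V : Submodule (ZMod p) (Fin n → ZMod p)) (x : Fin n → ZMod p),
      (n : ℝ) ≤ Module.finrank (ZMod p) V + k ∧
      ((∀ r : Fin n → ZMod p, (∃ v ∈ V, dotp r v ≠ 0) →
          ‖fcosetp A x V r‖ ≤ ε) ∨
        (k : ℝ) * (ε / 2) ≤ densA A x V) := by
  induction k with
  | zero =>
    refine ⟨⊤, 0, ?_, Or.inr ?_⟩
    · rw [finrank_top, Module.finrank_pi]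
      simp
    · simpa using densA_nonneg A 0 ⊤
  | succ k ih =>
    obtain ⟨V, x, hrank, h⟩ := ih
    rcases h with huni | hden
    · exact ⟨V, x, by push_cast; push_cast at hrank; linarith, Or.inl huni⟩
    by_cases hbad : ∃ r : Fin n → ZMod p, (∃ v ∈ V, dotp r v ≠ 0) ∧
        ε < ‖fcosetp A x V r‖
    · obtain ⟨r, hrv, hrb⟩ := hbad
      obtain ⟨W, y, hWrank, hWden⟩ := increment A V x r hrv hε (le_of_lt hrb)
      refine ⟨W, y, ?_, Or.inr ?_⟩
      · push_cast
        push_cast at hrank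
        have : (Module.finrank (ZMod p) V : ℝ) ≤ Module.finrank (ZMod p) W + 1 := by
          exact_mod_cast hWrank
        linarith
      · push_cast
        linarith
    · push_neg at hbad
      exact ⟨V, x, by push_cast; push_cast at hrank; linarith,
        Or.inl fun r hrv => hbad r hrv⟩

end Aux

/-- for every `ε > 0` and `A ⊆ 𝔽_pⁿ` there is a subspace `V` of
codimension `≪ ε⁻¹` and a coset `x + V` on which `A` is `ε`-uniform. -/
theorem uniform_on_some_coset :
    ∃ C : ℝ, 0 < C ∧
      ∀ (p : ℕ) [Fact p.Prime] (ε : ℝ), 0 < ε →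
        ∀ (n : ℕ) (A : Set (Fin n → ZMod p)),
          ∃ (V : Submodule (ZMod p) (Fin n → ZMod p)) (x : Fin n → ZMod p),
            ((n : ℝ) - Module.finrank (ZMod p) V ≤ C / ε) ∧
            ∀ r : Fin n → ZMod p, (∃ v ∈ V, dotp r v ≠ 0) →
              ‖fcosetp A x V r‖ ≤ ε := by
  refine ⟨3, by norm_num, ?_⟩
  intro p hp ε hε n A
  by_cases h1 : 1 ≤ ε
  · refine ⟨⊤, 0, ?_, fun r _ => le_trans (abs_fcosetp_le_one A 0 ⊤ r) h1⟩
    have : ((n : ℝ)) - Module.finrank (ZMod p) (⊤ : Submodule (ZMod p) (Fin n → ZMod p)) = 0 := by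
      rw [finrank_top, Module.finrank_pi]
      simp
    rw [this]
    positivity
  · push_neg at h1
    set k : ℕ := ⌊2 / ε⌋₊ + 1 with hk
    obtain ⟨V, x, hrank, h⟩ := key A hε k
    have hklt : 2 / ε < (k : ℝ) := by
      rw [hk]; push_cast
      exact Nat.lt_floor_add_one _
    have hden : ¬ ((k : ℝ) * (ε / 2) ≤ densA A x V) := by
      intro hcon
      have h2 : (1 : ℝ) < (k : ℝ) * (ε / 2) := by
        have := (div_lt_iff₀ hε).mp hklt
        linarith
      have := densA_le_one A x V
      linarith
    rcases h with huni | hd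
    · refine ⟨V, x, ?_, huni⟩
      have hkle : (k : ℝ) ≤ 2 / ε + 1 := by
        rw [hk]; push_cast
        have := Nat.floor_le (by positivity : (0:ℝ) ≤ 2 / ε)
        linarith
      have h2 : (1 : ℝ) ≤ 1 / ε := by
        rw [le_div_iff₀ hε]; linarith
      have h3 : (k : ℝ) ≤ 3 / ε := by
        have : 2 / ε + 1 / ε = 3 / ε := by ring
        linarith
      linarith
    · exact absurd hd hden
end
end

section
/- (Graham–Rothschild finite unions theorem, vector space form) For all positive integers r and d there exists n₀(r,d) such that for all n ≥ n₀(r,d): for every r-colouring c : 𝔽₂ⁿ \ {0} → [r], there exist linearly independent x₁,…,x_d ∈ 𝔽₂ⁿ such that all nonempty subset sums ∑_{i∈I} x_i, ∅ ≠ I ⊆ [d], receive the same colour. -/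
open Finset
noncomputable section


/-- Over `ZMod 2`, if all nonempty subset sums are nonzero, the family is linearly
independent. -/
lemma linearIndependent_of_subset_sums_ne_zero {V : Type*} [AddCommGroup V]
    [Module (ZMod 2) V] {d : ℕ} {x : Fin d → V}
    (h : ∀ I : Finset (Fin d), I.Nonempty → ∑ i ∈ I, x i ≠ 0) :
    LinearIndependent (ZMod 2) x := by
  rw [Fintype.linearIndependent_iff]
  intro g hg i
  by_contra hgi
  have h01 : ∀ a : ZMod 2, a = 0 ∨ a = 1 := by decide
  have hgi1 : g i = 1 := (h01 (g i)).resolve_left hgi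
  set I : Finset (Fin d) := Finset.univ.filter (fun j => g j = 1) with hI
  have hiI : i ∈ I := by simp [hI, hgi1]
  have hsum : ∑ j ∈ I, x j = ∑ j : Fin d, g j • x j := by
    rw [Finset.sum_filter]
    refine Finset.sum_congr rfl fun j _ => ?_
    rcases h01 (g j) with h0 | h1
    · simp [h0]
    · simp [h1]
  exact h I ⟨i, hiI⟩ (hsum.trans hg)

lemma FS_singles_aux {a : Stream' (ℕ → ZMod 2)} {m : ℕ → ZMod 2}
    (hm : m ∈ Hindman.FS a) :
    ∀ n : ℕ, a = Stream'.drop n (fun k => Pi.single k (1 : ZMod 2)) →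
      ∃ S : Finset ℕ, S.Nonempty ∧ (∀ k ∈ S, n ≤ k) ∧ m = ∑ k ∈ S, Pi.single k 1 := by
  induction hm with
  | head' a =>
    intro n hn
    refine ⟨{n}, ⟨n, by simp⟩, by simp, ?_⟩
    subst hn
    erw [Stream'.head_drop, Finset.sum_singleton]
    rfl
  | tail' a m h ih =>
    intro n hn
    have htail : a.tail = Stream'.drop (n + 1) (fun k => Pi.single k (1 : ZMod 2)) := by
      rw [hn, Stream'.tail_eq_drop]; erw [Stream'.drop_drop]
    obtain ⟨S, hS1, hS2, hS3⟩ := ih (n + 1) htail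
    exact ⟨S, hS1, fun k hk => le_trans (Nat.le_succ n) (hS2 k hk), hS3⟩
  | cons' a m h ih =>
    intro n hn
    have htail : a.tail = Stream'.drop (n + 1) (fun k => Pi.single k (1 : ZMod 2)) := by
      rw [hn, Stream'.tail_eq_drop]; erw [Stream'.drop_drop]
    obtain ⟨S, hS1, hS2, hS3⟩ := ih (n + 1) htail
    have hnS : n ∉ S := fun hmem => by have := hS2 n hmem; omega
    refine ⟨insert n S, ⟨n, Finset.mem_insert_self n S⟩, ?_, ?_⟩
    · intro k hk
      rcases Finset.mem_insert.mp hk with rfl | hk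
      · exact le_refl k
      · exact le_trans (Nat.le_succ n) (hS2 k hk)
    · have hhd : a.head = (Pi.single n 1 : ℕ → ZMod 2) := by
        rw [hn]; erw [Stream'.head_drop]
        rfl
      rw [Finset.sum_insert hnS, hhd, hS3]

lemma sum_single_apply {S : Finset ℕ} {k₀ : ℕ} (h : k₀ ∈ S) :
    (∑ k ∈ S, (Pi.single k 1 : ℕ → ZMod 2)) k₀ = 1 := by
  have h2 := Finset.sum_eq_single_of_mem (f := fun k => (Pi.single k 1 : ℕ → ZMod 2) k₀) k₀ h
    (fun b _ hb => Pi.single_eq_of_ne (Ne.symm hb) 1)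
  rw [Finset.sum_apply, h2]
  exact Pi.single_eq_same k₀ 1

lemma hindman_step (r d : ℕ) (c : (ℕ → ZMod 2) → Fin r) :
    ∃ (x : Fin d → (ℕ → ZMod 2)) (col : Fin r),
      ∀ I : Finset (Fin d), I.Nonempty →
        (∃ S : Finset ℕ, S.Nonempty ∧ ∑ i ∈ I, x i = ∑ k ∈ S, (Pi.single k 1 : ℕ → ZMod 2))
        ∧ c (∑ i ∈ I, x i) = col := by
  set a : Stream' (ℕ → ZMod 2) := fun k => Pi.single k 1 with ha
  set parts : Set (Set (ℕ → ZMod 2)) :=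
    Set.range (fun j : Fin r => {m | m ∈ Hindman.FS a ∧ c m = j}) with hparts
  have hfin : parts.Finite := Set.finite_range _
  have hcov : Hindman.FS a ⊆ ⋃₀ parts := fun m hm => ⟨_, ⟨c m, rfl⟩, hm, rfl⟩
  obtain ⟨t, ⟨j, rfl⟩, b, hb⟩ := Hindman.FS_partition_regular a parts hfin hcov
  refine ⟨fun i => b.get i, j, fun I hI => ?_⟩
  have h1 : ∑ i ∈ I, b.get ↑i ∈ Hindman.FS b := by
    have h2 := Hindman.FS.finset_sum b (I.image Fin.val) (hI.image _)
    rwa [Finset.sum_image (fun i _ i' _ h => Fin.val_injective h)] at h2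
  obtain ⟨hFSa, hcol⟩ := hb h1
  obtain ⟨S, hS1, _, hS3⟩ := FS_singles_aux hFSa 0 rfl
  exact ⟨⟨S, hS1, hS3⟩, hcol⟩

/-- Graham–Rothschild finite unions theorem, vector space form:
for all `r, d ≥ 1` there is `n₀` such that for `n ≥ n₀`, any `r`-colouring of
`𝔽₂ⁿ \ {0}` admits linearly independent `x₁, …, x_d` all of whose nonempty
subset sums get the same colour. -/
theorem graham_rothschild_subspaces (r d : ℕ) (hr : 1 ≤ r) (hd : 1 ≤ d) :
    ∃ n₀ : ℕ, ∀ n ≥ n₀, ∀ c : (Fin n → ZMod 2) → Fin r,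
      ∃ x : Fin d → (Fin n → ZMod 2),
        LinearIndependent (ZMod 2) x ∧
        ∃ col : Fin r, ∀ I : Finset (Fin d), I.Nonempty →
          c (∑ i ∈ I, x i) = col := by
  have key : ∃ N : ℕ, ∀ c : (Fin N → ZMod 2) → Fin r,
      ∃ x : Fin d → (Fin N → ZMod 2),
        LinearIndependent (ZMod 2) x ∧
        ∃ col : Fin r, ∀ I : Finset (Fin d), I.Nonempty →
          c (∑ i ∈ I, x i) = col := by
    by_contra hcon
    rw [not_exists] at hcon
    have hcon' : ∀ N : ℕ, ∃ c : (Fin N → ZMod 2) → Fin r,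
        ¬ ∃ x : Fin d → (Fin N → ZMod 2),
          LinearIndependent (ZMod 2) x ∧
          ∃ col : Fin r, ∀ I : Finset (Fin d), I.Nonempty →
            c (∑ i ∈ I, x i) = col := fun N => not_forall.mp (hcon N)
    choose cf hcf using hcon'
    set U : Ultrafilter ℕ := Filter.hyperfilter ℕ with hU
    have hlim : ∀ f : ℕ → Fin r, ∃ j : Fin r, {n | f n = j} ∈ U := by
      intro f
      have hcover : (⋃ j ∈ (Set.univ : Set (Fin r)), f ⁻¹' {j}) ∈ U := by
        have he : (⋃ j ∈ (Set.univ : Set (Fin r)), f ⁻¹' {j}) = Set.univ := by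
          ext n; simp
        rw [he]; exact Filter.univ_mem
      obtain ⟨j, _, hj⟩ := (Ultrafilter.finite_biUnion_mem_iff Set.finite_univ).mp hcover
      exact ⟨j, hj⟩
    set F : (ℕ → ZMod 2) → ℕ → Fin r := fun f n => cf n (fun i : Fin n => f ↑i) with hF
    set chat : (ℕ → ZMod 2) → Fin r := fun f => (hlim (F f)).choose with hchatdef
    have hchat : ∀ f, {n | F f n = chat f} ∈ U := fun f => (hlim (F f)).choose_spec
    obtain ⟨x, col, hx⟩ := hindman_step r d chat
    choose Sfun hSne hSeq using fun i : Fin d => (hx {i} (Finset.singleton_nonempty i)).1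
    have hxeq : ∀ i : Fin d, x i = ∑ k ∈ Sfun i, Pi.single k 1 := by
      intro i
      have := hSeq i
      rwa [Finset.sum_singleton] at this
    set m : ℕ := (Finset.univ.sup (fun i : Fin d => (Sfun i).sup id)) + 1 with hm
    have hxm : ∀ (i : Fin d) (k : ℕ), m ≤ k → x i k = 0 := by
      intro i k hk
      rw [hxeq i, Finset.sum_apply]
      apply Finset.sum_eq_zero
      intro b hb
      have hb1 : b ≤ (Sfun i).sup id := Finset.le_sup (f := id) hb
      have hb2 : (Sfun i).sup id ≤ Finset.univ.sup (fun i : Fin d => (Sfun i).sup id) :=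
        Finset.le_sup (f := fun i : Fin d => (Sfun i).sup id) (Finset.mem_univ i)
      have : b ≠ k := by omega
      exact Pi.single_eq_of_ne (Ne.symm this) 1
    have hIcap : (⋂ I : Finset (Fin d), {n | F (∑ i ∈ I, x i) n = chat (∑ i ∈ I, x i)}) ∈ U :=
      Filter.iInter_mem.mpr fun I => hchat _
    have hge : {n | m ≤ n} ∈ U := by
      have : {n : ℕ | m ≤ n} ∈ Filter.cofinite := by
        rw [Filter.mem_cofinite]
        have : {n : ℕ | m ≤ n}ᶜ = {n | n < m} := by ext n; simp
        rw [this]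
        exact Set.finite_lt_nat m
      exact Filter.hyperfilter_le_cofinite this
    have hmem : ({n | m ≤ n} ∩ ⋂ I : Finset (Fin d),
        {n | F (∑ i ∈ I, x i) n = chat (∑ i ∈ I, x i)}) ∈ U :=
      Filter.inter_mem hge hIcap
    obtain ⟨n, hn1, hn2⟩ := Ultrafilter.nonempty_of_mem hmem
    have hmn : m ≤ n := hn1
    set y : Fin d → (Fin n → ZMod 2) := fun i j => x i ↑j with hy
    have hysum : ∀ I : Finset (Fin d), ∑ i ∈ I, y i = fun j : Fin n => (∑ i ∈ I, x i) ↑j := by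
      intro I
      funext j
      rw [Finset.sum_apply, Finset.sum_apply]
    have hycol : ∀ I : Finset (Fin d), I.Nonempty → cf n (∑ i ∈ I, y i) = col := by
      intro I hI
      have h1 : n ∈ {k | F (∑ i ∈ I, x i) k = chat (∑ i ∈ I, x i)} := Set.mem_iInter.mp hn2 I
      have h2 : chat (∑ i ∈ I, x i) = col := (hx I hI).2
      rw [hysum I]
      exact h1.trans h2
    have hind : LinearIndependent (ZMod 2) y := by
      apply linearIndependent_of_subset_sums_ne_zero
      intro I hI h0
      obtain ⟨⟨S, hS1, hS3⟩, _⟩ := hx I hI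
      obtain ⟨k₀, hk₀⟩ := hS1
      have hval : (∑ i ∈ I, x i) k₀ = 1 := by rw [hS3]; exact sum_single_apply hk₀
      have hk₀m : k₀ < m := by
        by_contra hcon2
        push_neg at hcon2
        have : (∑ i ∈ I, x i) k₀ = 0 := by
          rw [Finset.sum_apply]
          exact Finset.sum_eq_zero fun i _ => hxm i k₀ hcon2
        rw [this] at hval
        exact one_ne_zero hval.symm
      have hk₀n : k₀ < n := lt_of_lt_of_le hk₀m hmn
      have := congrFun h0 ⟨k₀, hk₀n⟩
      rw [hysum I] at this
      simp only at this
      rw [hval] at this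
      exact one_ne_zero this
    exact hcf n ⟨y, hind, col, hycol⟩
  obtain ⟨N, hN⟩ := key
  refine ⟨N, fun n hn c => ?_⟩
  let E : (Fin N → ZMod 2) →ₗ[ZMod 2] (Fin n → ZMod 2) :=
    { toFun := fun v j => if h : (j : ℕ) < N then v ⟨j, h⟩ else 0
      map_add' := by
        intro u v; funext j; by_cases h : (j : ℕ) < N <;> simp [h]
      map_smul' := by
        intro a v; funext j; by_cases h : (j : ℕ) < N <;> simp [h] }
  have hEinj : LinearMap.ker E = ⊥ := by
    rw [LinearMap.ker_eq_bot']
    intro v hv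
    funext i
    have := congrFun hv (Fin.castLE hn i)
    simpa [E, Fin.castLE, i.isLt] using this
  obtain ⟨x, hxi, col, hcol⟩ := hN (c ∘ E)
  refine ⟨fun i => E (x i), hxi.map' E hEinj, col, fun I hI => ?_⟩
  rw [← map_sum]
  exact hcol I hI
end
end

section
/- (Ramsey theorem for almost colourings) For all positive integers r, d there exist η(r,d) > 0 and n₀(r,d) such that for all n ≥ n₀(r,d) and all 0 ≤ η ≤ η(r,d): if c : X̃ → [r] is a colouring of a subset X̃ ⊆ 𝔽₂ⁿ with |𝔽₂ⁿ \ X̃| ≤ η·2ⁿ, then there exist linearly independent x₁,…,x_d ∈ 𝔽₂ⁿ such that every nonempty subset sum ∑_{i∈I} x_i lies in X̃ and all these subset sums receive the same colour. One may take η(r,d) = 2^{-m-1} where m = m(r,d) is admissible for the full-colouring (η = 0) case. -/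
open scoped Classical
open Finset
noncomputable section

section Helpers

private lemma zmod2_cases (c : ZMod 2) : c = 0 ∨ c = 1 := by revert c; decide

/-- Over `ZMod 2`, linear independence is equivalent to all nonempty subset sums
being nonzero. -/
private lemma li_iff_subset_sums {W : Type*} [AddCommGroup W] [Module (ZMod 2) W]
    {k : ℕ} (x : Fin k → W) :
    LinearIndependent (ZMod 2) x ↔
      ∀ I : Finset (Fin k), I.Nonempty → ∑ i ∈ I, x i ≠ 0 := by
  rw [Fintype.linearIndependent_iff]
  constructor
  · intro h I hI hsum
    obtain ⟨i₀, hi₀⟩ := hI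
    have := h (fun i => if i ∈ I then (1 : ZMod 2) else 0) ?_ i₀
    · simp [hi₀] at this
    · rw [← hsum]
      rw [Finset.sum_congr rfl (g := fun i => if i ∈ I then x i else 0)]
      · rw [Finset.sum_ite_mem, Finset.univ_inter]
      · intro i _
        by_cases hi : i ∈ I <;> simp [hi]
  · intro h g hg i
    by_contra hgi
    have hg1 : g i = 1 := (zmod2_cases (g i)).resolve_left hgi
    have hne : (Finset.univ.filter (fun j => g j = 1)).Nonempty :=
      ⟨i, by simp [hg1]⟩
    refine h _ hne ?_
    rw [← hg]
    rw [Finset.sum_filter]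
    refine Finset.sum_congr rfl fun j _ => ?_
    rcases zmod2_cases (g j) with h0 | h1 <;> simp [*]

end Helpers

section FiniteVersion

private abbrev V2 : Type := ℕ →₀ ZMod 2

/-- the stream of standard basis vectors -/
private def eStream : Stream' V2 := fun i => Finsupp.single i (1 : ZMod 2)

private lemma FS_eStream_aux : ∀ (a : Stream' V2) (v : V2), v ∈ Hindman.FS a →
    ∀ n : ℕ, a = Stream'.drop n eStream → v ≠ 0 ∧ ∀ j < n, v j = 0 := by
  intro a v h
  induction h with
  | head' a =>
    rintro n rfl
    rw [Stream'.head_drop]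
    constructor
    · show Finsupp.single n (1 : ZMod 2) ≠ 0
      simp [Finsupp.single_eq_zero]
    · intro j hj
      rw [show (eStream.get n) = Finsupp.single n (1 : ZMod 2) from rfl]
      rw [Finsupp.single_apply_eq_zero]
      intro hjn; omega
  | tail' a m h ih =>
    rintro n rfl
    have htail : (Stream'.drop n eStream).tail = Stream'.drop (n + 1) eStream := by
      rw [Stream'.tail_eq_drop, Stream'.drop_drop, Nat.add_comm]
    obtain ⟨h1, h2⟩ := ih (n + 1) htail
    exact ⟨h1, fun j hj => h2 j (by omega)⟩
  | cons' a m h ih =>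
    rintro n rfl
    have htail : (Stream'.drop n eStream).tail = Stream'.drop (n + 1) eStream := by
      rw [Stream'.tail_eq_drop, Stream'.drop_drop, Nat.add_comm]
    obtain ⟨h1, h2⟩ := ih (n + 1) htail
    rw [Stream'.head_drop]
    have hhead : eStream.get n = Finsupp.single n (1 : ZMod 2) := rfl
    constructor
    · intro h0
      have : (eStream.get n + m) n = 0 := by rw [h0]; rfl
      rw [Finsupp.add_apply, hhead, Finsupp.single_eq_same, h2 n (by omega)] at this
      simp at this
    · intro j hj
      rw [Finsupp.add_apply, hhead, h2 j (by omega), Finsupp.single_apply_eq_zero.2]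
      · simp
      · intro hjn; omega

private lemma FS_eStream_ne_zero {v : V2} (h : v ∈ Hindman.FS eStream) : v ≠ 0 :=
  (FS_eStream_aux eStream v h 0 (by rw [Stream'.drop_zero])).1

/-- Finite full-colouring Ramsey theorem for `𝔽₂`-subset sums (Graham–Rothschild,
finite unions theorem), derived from Hindman's theorem by compactness. -/
private lemma finite_version (r d : ℕ) :
    ∃ m : ℕ, ∀ c : (Fin m → ZMod 2) → Fin r,
      ∃ y : Fin d → (Fin m → ZMod 2), LinearIndependent (ZMod 2) y ∧
        ∃ col : Fin r, ∀ I : Finset (Fin d), I.Nonempty → c (∑ j ∈ I, y j) = col := by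
  by_contra hcon
  push_neg at hcon
  choose c hbad using hcon
  -- build a limit colouring of V2 via an ultrafilter
  set U : Ultrafilter ℕ := Filter.hyperfilter ℕ with hU
  have key : ∀ v : V2, ∃ col : Fin r,
      {m : ℕ | c m (fun i : Fin m => v i) = col} ∈ U := by
    intro v
    obtain ⟨col, -, hcol⟩ := Ultrafilter.eq_pure_of_finite_mem
      (f := U.map (fun m => c m (fun i : Fin m => v i))) Set.finite_univ Filter.univ_mem
    refine ⟨col, ?_⟩
    have : {col} ∈ U.map (fun m => c m (fun i : Fin m => v i)) := by
      rw [hcol]; exact rfl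
    rw [Ultrafilter.mem_map] at this
    have hset : (fun m => c m (fun i : Fin m => v i)) ⁻¹' {col}
        = {m : ℕ | c m (fun i : Fin m => v i) = col} := by
      ext m; simp
    rw [← hset]
    exact this
  choose C hC using key
  -- Hindman
  obtain ⟨cell, hcellmem, b, hb⟩ := Hindman.FS_partition_regular eStream
    (Set.range (fun k : Fin r => {v : V2 | v ∈ Hindman.FS eStream ∧ C v = k}))
    (Set.finite_range _) (by
      intro v hv
      exact ⟨_, ⟨C v, rfl⟩, hv, rfl⟩)
  obtain ⟨col₀, rfl⟩ := hcellmem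
  set x : Fin d → V2 := fun j => b.get j with hx
  have hsum_mem : ∀ I : Finset (Fin d), I.Nonempty →
      (∑ j ∈ I, x j) ∈ Hindman.FS eStream ∧ C (∑ j ∈ I, x j) = col₀ := by
    intro I hI
    have himg : ∑ n ∈ I.image Fin.val, b.get n = ∑ j ∈ I, x j :=
      Finset.sum_image (by intro a _ b _ h; exact Fin.val_injective h)
    have : (∑ j ∈ I, x j) ∈ Hindman.FS b :=
      himg ▸ Hindman.FS.finset_sum b _ (hI.image _)
    exact hb this
  -- bound on supports
  set N : ℕ := (Finset.univ.sup (fun i : Fin d => (x i).support.sup id)) + 1 with hN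
  have hsupp : ∀ (i : Fin d) (j : ℕ), N ≤ j → x i j = 0 := by
    intro i j hj
    by_contra h0
    have hjs : j ∈ (x i).support := Finsupp.mem_support_iff.2 h0
    have : j ≤ (x i).support.sup id := Finset.le_sup (f := id) hjs
    have : (x i).support.sup id ≤ Finset.univ.sup (fun i : Fin d => (x i).support.sup id) :=
      Finset.le_sup (f := fun i : Fin d => (x i).support.sup id) (Finset.mem_univ i)
    omega
  -- choose a good m
  have hT : ({m : ℕ | N < m} ∩
      ⋂ I : Finset (Fin d), {m : ℕ | c m (fun t : Fin m => (∑ j ∈ I, x j) t)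
        = C (∑ j ∈ I, x j)}) ∈ U := by
    refine Filter.inter_mem ?_ ?_
    · refine Filter.hyperfilter_le_cofinite ?_
      rw [Filter.mem_cofinite]
      have hcompl : {m : ℕ | N < m}ᶜ = Set.Iic N := by
        ext m; simp [Nat.not_lt]
      rw [hcompl]
      exact Set.finite_Iic N
    · rw [Filter.iInter_mem]
      intro I
      exact hC _
  obtain ⟨m, hm⟩ := Filter.nonempty_of_mem hT
  obtain ⟨hmN, hmI⟩ := hm
  rw [Set.mem_iInter] at hmI
  simp only [Set.mem_setOf_eq] at hmN hmI
  -- restrict to Fin m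
  set y : Fin d → (Fin m → ZMod 2) := fun i => fun t : Fin m => x i t with hy
  have hrestr : ∀ I : Finset (Fin d),
      (fun t : Fin m => (∑ j ∈ I, x j) t) = ∑ j ∈ I, y j := by
    intro I
    funext t
    rw [Finset.sum_apply, Finsupp.finset_sum_apply]
  have hyzero : ∀ I : Finset (Fin d), I.Nonempty → ∑ j ∈ I, y j ≠ 0 := by
    intro I hI h0
    obtain ⟨hFS, -⟩ := hsum_mem I hI
    have hne : (∑ j ∈ I, x j) ≠ 0 := FS_eStream_ne_zero hFS
    obtain ⟨j, hj⟩ : ∃ j, (∑ j' ∈ I, x j') j ≠ 0 := by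
      by_contra hall
      push_neg at hall
      exact hne (Finsupp.ext hall)
    have hjN : j < N := by
      by_contra hjN
      push_neg at hjN
      apply hj
      rw [Finsupp.finset_sum_apply]
      exact Finset.sum_eq_zero fun i _ => hsupp i j hjN
    have hjm : j < m := by omega
    have hcf := congrFun (hrestr I) ⟨j, hjm⟩
    rw [h0] at hcf
    simp only [Pi.zero_apply] at hcf
    exact hj hcf
  obtain ⟨I, hI, hIne⟩ := hbad m y ((li_iff_subset_sums y).2 hyzero) col₀
  apply hIne
  rw [← hrestr I, hmI I, (hsum_mem I hI).2]

end FiniteVersion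

section Greedy

private lemma char_two_add_self {n : ℕ} (w : Fin n → ZMod 2) : w + w = 0 := by
  funext i
  have : ∀ z : ZMod 2, z + z = 0 := by decide
  exact this (w i)

/-- Greedy construction of an `m`-dimensional subcube all of whose nonzero points
lie in `X`. -/
private lemma exists_good_subspace (m n : ℕ) (hmn : m + 2 ≤ n)
    (X : Finset (Fin n → ZMod 2))
    (hX : ((Finset.univ \ X).card : ℝ) ≤ 2 ^ n / 2 ^ (m + 1)) :
    ∃ v : Fin m → (Fin n → ZMod 2),
      ∀ a : Fin m → ZMod 2, a ≠ 0 →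
        (∑ i, a i • v i ∈ X ∧ ∑ i, a i • v i ≠ 0) := by
  suffices h : ∀ k, k ≤ m → ∃ v : Fin k → (Fin n → ZMod 2),
      ∀ a : Fin k → ZMod 2, a ≠ 0 →
        (∑ i, a i • v i ∈ X ∧ ∑ i, a i • v i ≠ 0) from h m le_rfl
  intro k hk
  induction k with
  | zero =>
    refine ⟨Fin.elim0, fun a ha => absurd ?_ ha⟩
    funext i; exact i.elim0
  | succ k ih =>
    obtain ⟨v, hv⟩ := ih (by omega)
    -- the set of existing combinations
    set spanF : Finset (Fin n → ZMod 2) :=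
      Finset.image (fun a : Fin k → ZMod 2 => ∑ i, a i • v i) Finset.univ with hspanF
    set bad : Finset (Fin n → ZMod 2) :=
      spanF ∪ spanF.biUnion (fun w => (Finset.univ \ X).image (fun z => z + w)) with hbad
    have hcard_span : (spanF.card : ℝ) ≤ 2 ^ k := by
      have := Finset.card_image_le (f := fun a : Fin k → ZMod 2 => ∑ i, a i • v i)
        (s := Finset.univ)
      rw [Finset.card_univ] at this
      have hcard : Fintype.card (Fin k → ZMod 2) = 2 ^ k := by simp [ZMod.card]
      exact_mod_cast hcard ▸ this
    have hcard_bad : (bad.card : ℝ) < 2 ^ n := by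
      have h1 : bad.card ≤ spanF.card + spanF.card * (Finset.univ \ X).card := by
        refine (Finset.card_union_le _ _).trans ?_
        gcongr
        refine (Finset.card_biUnion_le).trans ?_
        calc ∑ w ∈ spanF, ((Finset.univ \ X).image (fun z => z + w)).card
            ≤ ∑ _w ∈ spanF, (Finset.univ \ X).card :=
              Finset.sum_le_sum fun w _ => Finset.card_image_le
          _ = spanF.card * (Finset.univ \ X).card := by rw [Finset.sum_const, smul_eq_mul]
      have h1' : (bad.card : ℝ) ≤ spanF.card + spanF.card * (Finset.univ \ X).card := by
        exact_mod_cast h1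
      have hD : ((Finset.univ \ X).card : ℝ) ≤ 2 ^ n / 2 ^ (m + 1) := hX
      have hDnn : (0 : ℝ) ≤ ((Finset.univ \ X).card : ℝ) := Nat.cast_nonneg _
      have hDm : ((Finset.univ \ X).card : ℝ) * 2 ^ (m + 1) ≤ 2 ^ n := by
        rw [← le_div_iff₀ (by positivity)]
        exact hD
      have h4 : (4 : ℝ) * 2 ^ k ≤ 2 ^ (m + 1) := by
        have h42 : (4 : ℝ) * 2 ^ k = 2 ^ (k + 2) := by ring
        rw [h42]
        exact pow_le_pow_right₀ (by norm_num) (by omega)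
      have h2 : (2 : ℝ) * 2 ^ k ≤ 2 ^ n := by
        have h22 : (2 : ℝ) * 2 ^ k = 2 ^ (k + 1) := by ring
        rw [h22]
        exact pow_le_pow_right₀ (by norm_num) (by omega)
      have e1 : (spanF.card : ℝ) * ((Finset.univ \ X).card : ℝ)
          ≤ 2 ^ k * ((Finset.univ \ X).card : ℝ) :=
        mul_le_mul_of_nonneg_right hcard_span hDnn
      have e2 : ((4 : ℝ) * 2 ^ k) * ((Finset.univ \ X).card : ℝ)
          ≤ 2 ^ (m + 1) * ((Finset.univ \ X).card : ℝ) :=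
        mul_le_mul_of_nonneg_right h4 hDnn
      nlinarith [pow_pos (show (0:ℝ) < 2 by norm_num) n]
    -- pick a good new vector
    have hbadne : bad ≠ Finset.univ := by
      intro h
      rw [h] at hcard_bad
      rw [Finset.card_univ] at hcard_bad
      have : Fintype.card (Fin n → ZMod 2) = 2 ^ n := by simp [ZMod.card]
      rw [this] at hcard_bad
      simp at hcard_bad
    obtain ⟨u, hu⟩ : ∃ u, u ∉ bad := by
      by_contra hall
      push_neg at hall
      exact hbadne (Finset.eq_univ_iff_forall.2 fun u => hall u)
    have huspan : u ∉ spanF := fun h => hu (Finset.mem_union_left _ h)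
    have hugood : ∀ w ∈ spanF, u + w ∈ X := by
      intro w hw
      by_contra hnotX
      apply hu
      refine Finset.mem_union_right _ (Finset.mem_biUnion.2 ⟨w, hw, ?_⟩)
      refine Finset.mem_image.2 ⟨u + w, ?_, ?_⟩
      · exact Finset.mem_sdiff.2 ⟨Finset.mem_univ _, hnotX⟩
      · rw [add_assoc, char_two_add_self, add_zero]
    refine ⟨Fin.cons u v, ?_⟩
    intro a ha
    have hsum : ∑ i, a i • Fin.cons u v i
        = a 0 • u + ∑ i : Fin k, a i.succ • v i := by
      rw [Fin.sum_univ_succ]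
      congr 1
    set w : Fin n → ZMod 2 := ∑ i : Fin k, a i.succ • v i with hw
    have hwspan : w ∈ spanF := Finset.mem_image.2 ⟨fun i => a i.succ, Finset.mem_univ _, rfl⟩
    rcases zmod2_cases (a 0) with h0 | h0
    · -- tail coefficients nonzero
      have hta : (fun i : Fin k => a i.succ) ≠ 0 := by
        intro h
        apply ha
        funext i
        refine Fin.cases ?_ ?_ i
        · exact h0
        · intro j; exact congrFun h j
      have := hv _ hta
      rw [hsum, h0, zero_smul, zero_add]
      exact this
    · rw [hsum, h0, one_smul]
      constructor
      · exact hugood w hwspan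
      · intro h
        apply huspan
        have : u = w := by
          have := congrArg (· + w) h
          simp only [zero_add] at this
          rw [add_assoc, char_two_add_self, add_zero] at this
          exact this
        rw [this]; exact hwspan

end Greedy

/-- Ramsey theorem for almost colourings: for all `r, d ≥ 1`
there are `η(r,d) > 0` and `n₀(r,d)` such that for `n ≥ n₀` and `0 ≤ η' ≤ η`,
any `r`-colouring of a subset `X̃ ⊆ 𝔽₂ⁿ` missing at most `η'·2ⁿ` points admits
linearly independent `x₁, …, x_d` all of whose nonempty subset sums lie in `X̃`
and get the same colour. -/
theorem almost_colouring_ramsey (r d : ℕ) (hr : 1 ≤ r) (hd : 1 ≤ d) :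
    ∃ η : ℝ, 0 < η ∧ ∃ n₀ : ℕ, ∀ n ≥ n₀, ∀ η' : ℝ, 0 ≤ η' → η' ≤ η →
      ∀ (X : Finset (Fin n → ZMod 2)) (c : (Fin n → ZMod 2) → Fin r),
        ((Finset.univ \ X).card : ℝ) ≤ η' * 2 ^ n →
        ∃ x : Fin d → (Fin n → ZMod 2),
          LinearIndependent (ZMod 2) x ∧
          ∃ col : Fin r, ∀ I : Finset (Fin d), I.Nonempty →
            (∑ i ∈ I, x i) ∈ X ∧ c (∑ i ∈ I, x i) = col := by
  obtain ⟨m, hm⟩ := finite_version r d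
  refine ⟨1 / 2 ^ (m + 1), by positivity, m + 2, ?_⟩
  intro n hn η' hη'0 hη'η X c hXcard
  have hXbound : ((Finset.univ \ X).card : ℝ) ≤ 2 ^ n / 2 ^ (m + 1) := by
    calc ((Finset.univ \ X).card : ℝ) ≤ η' * 2 ^ n := hXcard
      _ ≤ (1 / 2 ^ (m + 1)) * 2 ^ n := by gcongr
      _ = 2 ^ n / 2 ^ (m + 1) := by ring
  obtain ⟨v, hv⟩ := exists_good_subspace m n hn X hXbound
  obtain ⟨y, hyLI, col, hycol⟩ := hm (fun a => c (∑ i, a i • v i))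
  set x : Fin d → (Fin n → ZMod 2) := fun j => ∑ i, y j i • v i with hx
  have hswap : ∀ I : Finset (Fin d),
      ∑ j ∈ I, x j = ∑ i, (∑ j ∈ I, y j) i • v i := by
    intro I
    simp only [hx]
    rw [Finset.sum_comm]
    refine Finset.sum_congr rfl fun i _ => ?_
    rw [Finset.sum_apply, Finset.sum_smul]
  have hynz : ∀ I : Finset (Fin d), I.Nonempty → (∑ j ∈ I, y j) ≠ 0 :=
    (li_iff_subset_sums y).1 hyLI
  have hmain : ∀ I : Finset (Fin d), I.Nonempty →
      ((∑ j ∈ I, x j) ∈ X ∧ (∑ j ∈ I, x j) ≠ 0 ∧ c (∑ j ∈ I, x j) = col) := by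
    intro I hI
    obtain ⟨hmem, hnz⟩ := hv _ (hynz I hI)
    refine ⟨by rw [hswap]; exact hmem, by rw [hswap]; exact hnz, ?_⟩
    rw [hswap]
    exact hycol I hI
  refine ⟨x, ?_, col, fun I hI => ⟨(hmain I hI).1, (hmain I hI).2.2⟩⟩
  exact (li_iff_subset_sums x).2 fun I hI => (hmain I hI).2.1
end
end

section
/- Let m ≤ n be positive integers with n ≥ m + 3, and suppose Y ⊆ 𝔽₂ⁿ \ {0} satisfies |(𝔽₂ⁿ \ {0}) \ Y| ≤ 2^{-m}·|𝔽₂ⁿ \ {0}|. Then there exists an m-dimensional subspace V ≤ 𝔽₂ⁿ with V \ {0} ⊆ Y. -/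
open scoped Classical
open Finset
noncomputable section

theorem exists_linequiv_map_eq {K V : Type*} [Field K] [AddCommGroup V] [Module K V]
    [FiniteDimensional K V] {x w : V} (hx : x ≠ 0) (hw : w ≠ 0) :
    ∃ g : V ≃ₗ[K] V, g x = w := by
  classical
  have hxi := LinearIndepOn.singleton (R := K) (v := (id : V → V)) (i := x) hx
  have hwi := LinearIndepOn.singleton (R := K) (v := (id : V → V)) (i := w) hw
  let b := Module.Basis.extend hxi
  let b' := Module.Basis.extend hwi
  have hxmem : x ∈ hxi.extend (Set.subset_univ _) := hxi.subset_extend _ rfl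
  have hwmem : w ∈ hwi.extend (Set.subset_univ _) := hwi.subset_extend _ rfl
  haveI : Fintype (hxi.extend (Set.subset_univ _)) := FiniteDimensional.fintypeBasisIndex b
  haveI : Fintype (hwi.extend (Set.subset_univ _)) := FiniteDimensional.fintypeBasisIndex b'
  have hcard : Fintype.card (hxi.extend (Set.subset_univ _)) =
      Fintype.card (hwi.extend (Set.subset_univ _)) := by
    rw [← Module.finrank_eq_card_basis b, ← Module.finrank_eq_card_basis b']
  obtain ⟨σ⟩ := Fintype.card_eq.mp hcard
  let σ' : _ ≃ _ := σ.trans (Equiv.swap (σ ⟨x, hxmem⟩) ⟨w, hwmem⟩)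
  refine ⟨b.equiv b' σ', ?_⟩
  have hbx : b ⟨x, hxmem⟩ = x := Module.Basis.extend_apply_self _ _
  calc (b.equiv b' σ') x = (b.equiv b' σ') (b ⟨x, hxmem⟩) := by rw [hbx]
    _ = b' (σ' ⟨x, hxmem⟩) := b.equiv_apply _ _ _
    _ = w := by
        simp only [σ', Equiv.trans_apply, Equiv.swap_apply_left]
        exact Module.Basis.extend_apply_self _ _

/-- if `Y` contains all but a `2^{-m}`-fraction of the nonzero
vectors of `𝔽₂ⁿ` (with `n ≥ m + 3`, `m ≥ 1`), then some `m`-dimensional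
subspace has all of its nonzero vectors inside `Y`. -/
theorem punctured_subspace_in_dense_set {n m : ℕ} (hm : 1 ≤ m) (hn : m + 3 ≤ n)
    (Y : Finset (Fin n → ZMod 2)) (hY0 : ∀ y ∈ Y, y ≠ (0 : Fin n → ZMod 2))
    (hY : ((Finset.univ.filter (fun v : Fin n → ZMod 2 => v ≠ 0)) \ Y).card ≤
      ((2 : ℝ) ^ m)⁻¹ * ((2 : ℝ) ^ n - 1)) :
    ∃ V : Submodule (ZMod 2) (Fin n → ZMod 2),
      Module.finrank (ZMod 2) V = m ∧
      ∀ v ∈ V, v ≠ (0 : Fin n → ZMod 2) → v ∈ Y := by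
  classical
  haveI : Fintype ((Fin n → ZMod 2) →ₗ[ZMod 2] (Fin n → ZMod 2)) :=
    Fintype.ofInjective _ (DFunLike.coe_injective)
  have hmn : m ≤ n := by omega
  let f₀ : (Fin m → ZMod 2) →ₗ[ZMod 2] (Fin n → ZMod 2) :=
    { toFun := fun v j => if h : (j : ℕ) < m then v ⟨j, h⟩ else 0
      map_add' := by
        intro a b; funext j; simp only [Pi.add_apply]
        by_cases h : (j : ℕ) < m <;> simp [h]
      map_smul' := by
        intro c a; funext j; simp only [Pi.smul_apply, RingHom.id_apply, smul_eq_mul]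
        by_cases h : (j : ℕ) < m <;> simp [h] }
  have hf₀ : Function.Injective f₀ := by
    rw [injective_iff_map_eq_zero]
    intro a ha
    funext i
    have := congrFun ha (Fin.castLE hmn i)
    simpa [f₀, i.isLt] using this
  let V₀ := LinearMap.range f₀
  have hV₀rank : Module.finrank (ZMod 2) V₀ = m := by
    rw [LinearMap.finrank_range_of_inj hf₀]
    simp
  let T : Finset (Fin n → ZMod 2) := univ.filter (fun v => v ≠ 0)
  let B : Finset (Fin n → ZMod 2) := T \ Y
  let S : Finset (Fin n → ZMod 2) := univ.filter (fun v => v ∈ V₀ ∧ v ≠ 0)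
  let G : Finset ((Fin n → ZMod 2) →ₗ[ZMod 2] (Fin n → ZMod 2)) :=
    univ.filter (fun g => Function.Bijective g)
  have hTcard : T.card = 2 ^ n - 1 := by
    have h1 : T = univ.erase 0 := by
      ext v; simp [T, eq_comm, Ne]
    rw [h1, card_erase_of_mem (mem_univ _), card_univ]
    congr 1
    simp
  have hcardV₀ : Fintype.card V₀ = 2 ^ m := by
    have := Module.card_eq_pow_finrank (K := ZMod 2) (V := V₀)
    rwa [hV₀rank, ZMod.card] at this
  have hScard : S.card = 2 ^ m - 1 := by
    have h1 : S = (univ.filter (fun v => v ∈ V₀)).erase 0 := by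
      ext v
      simp only [S, mem_erase, mem_filter, mem_univ, true_and]
      tauto
    rw [h1, card_erase_of_mem (by simp [Submodule.zero_mem])]
    congr 1
    rw [← hcardV₀]
    exact (Fintype.card_of_subtype _ (fun x => by simp)).symm
  have hBne : ∀ w ∈ B, w ≠ 0 := by
    intro w hw
    have := (mem_sdiff.mp hw).1
    simpa [T] using this
  have fiber_eq : ∀ x : (Fin n → ZMod 2), x ≠ 0 → ∀ w w' : (Fin n → ZMod 2), w ≠ 0 → w' ≠ 0 →
      (G.filter (fun g => g x = w)).card = (G.filter (fun g => g x = w')).card := by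
    intro x hx w w' hw hw'
    obtain ⟨h, hh⟩ := exists_linequiv_map_eq (K := ZMod 2) hw hw'
    refine Finset.card_bij' (fun g _ => h.toLinearMap.comp g)
      (fun g _ => h.symm.toLinearMap.comp g) ?_ ?_ ?_ ?_
    · intro g hg
      simp only [G, mem_filter, mem_univ, true_and] at hg ⊢
      exact ⟨h.bijective.comp hg.1, by simp [hg.2, hh]⟩
    · intro g hg
      simp only [G, mem_filter, mem_univ, true_and] at hg ⊢
      have hs : h.symm w' = w := by rw [← hh]; exact h.symm_apply_apply _
      exact ⟨h.symm.bijective.comp hg.1, by simp [hg.2, hs]⟩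
    · intro g hg; ext v; simp
    · intro g hg; ext v; simp
  have fiber_mul : ∀ x : (Fin n → ZMod 2), x ≠ 0 → ∀ w : (Fin n → ZMod 2), w ≠ 0 →
      (2 ^ n - 1) * (G.filter (fun g => g x = w)).card = G.card := by
    intro x hx w hw
    have hpart : G.card = ∑ w' ∈ T, (G.filter (fun g => g x = w')).card := by
      apply Finset.card_eq_sum_card_fiberwise
      intro g hg
      simp only [G, mem_filter, mem_univ, true_and] at hg
      have : g x ≠ 0 := fun h0 => hx ((show Function.Bijective g by simpa [G] using hg).injective (by rw [h0, map_zero]))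
      simp [T, this]
    rw [hpart, Finset.sum_congr rfl
      (fun w' hw' => fiber_eq x hx w' w (by simpa [T] using hw') hw),
      Finset.sum_const, ← hTcard, smul_eq_mul]
  have key : (2 ^ n - 1) * ∑ g ∈ G, (S.filter (fun x => g x ∈ B)).card
      = (2 ^ m - 1) * (B.card * G.card) := by
    have h1 : ∀ g : (Fin n → ZMod 2) →ₗ[ZMod 2] (Fin n → ZMod 2),
        (S.filter (fun x => g x ∈ B)).card
        = ∑ x ∈ S, (if g x ∈ B then 1 else 0) := by
      intro g; rw [Finset.sum_boole]; simp
    calc (2 ^ n - 1) * ∑ g ∈ G, (S.filter (fun x => g x ∈ B)).card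
        = (2 ^ n - 1) * ∑ g ∈ G, ∑ x ∈ S, (if g x ∈ B then 1 else 0) := by
          rw [Finset.sum_congr rfl fun g _ => h1 g]
      _ = ∑ x ∈ S, (2 ^ n - 1) * ∑ g ∈ G, (if g x ∈ B then 1 else 0) := by
          rw [Finset.sum_comm, Finset.mul_sum]
      _ = ∑ x ∈ S, B.card * G.card := by
          apply Finset.sum_congr rfl
          intro x hx
          have hx0 : x ≠ 0 := ((mem_filter.mp hx).2).2
          have h2 : ∑ g ∈ G, (if g x ∈ B then 1 else 0)
              = (G.filter (fun g => g x ∈ B)).card := Finset.sum_boole _ _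
          rw [h2]
          have h3 : (G.filter (fun g => g x ∈ B)).card
              = ∑ w ∈ B, (G.filter (fun g => g x = w)).card := by
            have h4 := Finset.card_eq_sum_card_fiberwise
              (f := fun g : (Fin n → ZMod 2) →ₗ[ZMod 2] (Fin n → ZMod 2) => g x)
              (s := G.filter (fun g => g x ∈ B)) (t := B)
              (fun g hg => (mem_filter.mp hg).2)
            rw [h4]
            apply Finset.sum_congr rfl
            intro w hw
            congr 1
            ext g
            simp only [mem_filter]
            constructor
            · rintro ⟨⟨ha, _⟩, hc⟩; exact ⟨ha, hc⟩
            · rintro ⟨ha, hc⟩; exact ⟨⟨ha, hc ▸ hw⟩, hc⟩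
          rw [h3, Finset.mul_sum,
            Finset.sum_congr rfl (fun w hw => fiber_mul x hx0 w (hBne w hw)),
            Finset.sum_const, smul_eq_mul]
      _ = (2 ^ m - 1) * (B.card * G.card) := by
          rw [Finset.sum_const, smul_eq_mul, hScard]
  have hBbound : 2 ^ m * B.card ≤ 2 ^ n - 1 := by
    have hr : (2 : ℝ) ^ m * B.card ≤ 2 ^ n - 1 := by
      rw [mul_comm]
      calc (B.card : ℝ) * 2 ^ m ≤ ((2 : ℝ) ^ m)⁻¹ * ((2 : ℝ) ^ n - 1) * 2 ^ m :=
            mul_le_mul_of_nonneg_right hY (by positivity)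
        _ = 2 ^ n - 1 := by field_simp
    have h2 : ((2 ^ m * B.card : ℕ) : ℝ) ≤ ((2 ^ n - 1 : ℕ) : ℝ) := by
      push_cast [Nat.cast_sub (Nat.one_le_two_pow)]
      convert hr using 2 <;> norm_num
    exact_mod_cast h2
  have hstrict : (2 ^ m - 1) * B.card < 2 ^ n - 1 := by
    have h2n : (16 : ℕ) ≤ 2 ^ n := by
      calc (16 : ℕ) = 2 ^ 4 := by norm_num
        _ ≤ 2 ^ n := Nat.pow_le_pow_right (by norm_num) (by omega)
    rcases Nat.eq_zero_or_pos B.card with h0 | h0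
    · rw [h0, mul_zero]; omega
    · have h1 : (2 ^ m - 1) * B.card = 2 ^ m * B.card - 1 * B.card :=
        Nat.sub_mul _ _ _
      rw [one_mul] at h1
      omega
  have hGsum : ∑ g ∈ G, (S.filter (fun x => g x ∈ B)).card < G.card := by
    by_contra hcon
    push_neg at hcon
    have h5 := Nat.mul_le_mul_left (2 ^ n - 1) hcon
    rw [key] at h5
    have hGpos : 0 < G.card :=
      Finset.card_pos.mpr ⟨LinearMap.id, by simp [G, Function.bijective_id]⟩
    have h2n : (16 : ℕ) ≤ 2 ^ n := by
      calc (16 : ℕ) = 2 ^ 4 := by norm_num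
        _ ≤ 2 ^ n := Nat.pow_le_pow_right (by norm_num) (by omega)
    nlinarith [hstrict, hGpos, h5]
  obtain ⟨g, hgG, hgzero⟩ : ∃ g ∈ G, (S.filter (fun x => g x ∈ B)).card = 0 := by
    by_contra hcon
    push_neg at hcon
    have h6 : G.card ≤ ∑ g ∈ G, (S.filter (fun x => g x ∈ B)).card := by
      calc G.card = ∑ _g ∈ G, 1 := by simp
        _ ≤ _ := Finset.sum_le_sum fun g hg => Nat.one_le_iff_ne_zero.mpr (hcon g hg)
    omega
  have hgbij : Function.Bijective g := by simpa [G] using hgG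
  refine ⟨V₀.map g, ?_, ?_⟩
  · rw [show V₀.map g = V₀.map (LinearEquiv.ofBijective g hgbij).toLinearMap from rfl,
      LinearEquiv.finrank_map_eq, hV₀rank]
  · intro v hv hv0
    obtain ⟨x, hxV₀, rfl⟩ := Submodule.mem_map.mp hv
    have hx0 : x ≠ 0 := by rintro rfl; simp at hv0
    have hxS : x ∈ S := mem_filter.mpr ⟨mem_univ _, hxV₀, hx0⟩
    have hnB : g x ∉ B := by
      intro hB
      have h7 : x ∈ S.filter (fun x => g x ∈ B) := mem_filter.mpr ⟨hxS, hB⟩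
      rw [Finset.card_eq_zero] at hgzero
      simp [hgzero] at h7
    have hgxT : g x ∈ T := by simp [T, hv0]
    by_contra hnot
    exact hnB (mem_sdiff.mpr ⟨hgxT, hnot⟩)
end
end

section
/- Let A ⊆ 𝔽₂ⁿ, W ≤ 𝔽₂ⁿ a subspace, d ≥ 1, ε > 0, and let x₁,…,x_d ∈ 𝔽₂ⁿ have linearly independent images mod W. Suppose that for every nonempty I ⊆ [d], the set A is ε-uniform on the coset (∑_{i∈I} x_i) + W, i.e., |(1_A μ_{∑_{i∈I} x_i + W})^∧(r)| ≤ ε for all r ∉ W^⊥. Set V = W + ⟨x₁,…,x_d⟩. Then for every r ∉ W^⊥, |(1_A μ_V)^∧(r)| ≤ 2^{-d} + ε. -/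
open scoped Classical
open Finset
noncomputable section

/-- Dot product on `𝔽₂ⁿ`. -/
def dot2 {n : ℕ} (r x : Fin n → ZMod 2) : ZMod 2 := ∑ i, r i * x i

/-- The additive character `t ↦ (-1)^t` of `𝔽₂`. -/
def chi2 (t : ZMod 2) : ℂ := (-1 : ℂ) ^ t.val

/-- `(1_A μ_{x+W})^∧(r) = |W|⁻¹ ∑_{w ∈ W} 1_A(x+w) (-1)^{r·(x+w)}`. -/
def fcoset2 {n : ℕ} (A : Set (Fin n → ZMod 2)) (x : Fin n → ZMod 2)
    (W : Submodule (ZMod 2) (Fin n → ZMod 2)) (r : Fin n → ZMod 2) : ℂ :=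
  (∑ w : W, if x + (w : Fin n → ZMod 2) ∈ A then
      chi2 (dot2 r (x + (w : Fin n → ZMod 2))) else 0) / (Fintype.card W)

/-- The density `𝔼_{x+W} 1_A` of `A` on the coset `x + W`. -/
def dens2 {n : ℕ} (A : Set (Fin n → ZMod 2)) (x : Fin n → ZMod 2)
    (W : Submodule (ZMod 2) (Fin n → ZMod 2)) : ℝ :=
  (∑ w : W, if x + (w : Fin n → ZMod 2) ∈ A then (1 : ℝ) else 0) / (Fintype.card W)

lemma abs_chi2 (t : ZMod 2) : ‖(chi2 t)‖ = 1 := by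
  simp [chi2]

lemma abs_fcoset2_le_one {n : ℕ} (A : Set (Fin n → ZMod 2)) (x : Fin n → ZMod 2)
    (W : Submodule (ZMod 2) (Fin n → ZMod 2)) (r : Fin n → ZMod 2) :
    ‖(fcoset2 A x W r)‖ ≤ 1 := by
  have hcard : (0:ℝ) < Fintype.card W := by
    exact_mod_cast Fintype.card_pos
  rw [fcoset2, norm_div, Complex.norm_natCast, div_le_one hcard]
  calc ‖(∑ w : W, if x + (w : Fin n → ZMod 2) ∈ A then
          chi2 (dot2 r (x + (w : Fin n → ZMod 2))) else 0)‖
      ≤ ∑ w : W, ‖(if x + (w : Fin n → ZMod 2) ∈ A then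
          chi2 (dot2 r (x + (w : Fin n → ZMod 2))) else 0)‖ := by
        exact norm_sum_le _ _
    _ ≤ ∑ _w : W, (1:ℝ) := by
        refine Finset.sum_le_sum fun w _ => ?_
        split
        · simp [abs_chi2]
        · simp
    _ = Fintype.card W := by simp


/-- if `A` is `ε`-uniform on every coset `(∑_{i∈I} xᵢ) + W` with
`I ≠ ∅`, then for `V = W + ⟨x₁,…,x_d⟩` and every `r ∉ W^⊥` we have
`|(1_A μ_V)^∧(r)| ≤ 2^{-d} + ε`. -/
theorem uniformity_outside_W_perp {n d : ℕ} (hd : 1 ≤ d)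
    (A : Set (Fin n → ZMod 2)) (W : Submodule (ZMod 2) (Fin n → ZMod 2))
    (ε : ℝ) (hε : 0 < ε)
    (x : Fin d → (Fin n → ZMod 2))
    (hx : LinearIndependent (ZMod 2) fun i => Submodule.Quotient.mk (p := W) (x i))
    (hunif : ∀ I : Finset (Fin d), I.Nonempty →
      ∀ r : Fin n → ZMod 2, (∃ w ∈ W, dot2 r w ≠ 0) →
        ‖fcoset2 A (∑ i ∈ I, x i) W r‖ ≤ ε)
    (V : Submodule (ZMod 2) (Fin n → ZMod 2))
    (hV : V = W ⊔ Submodule.span (ZMod 2) (Set.range x)) :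
    ∀ r : Fin n → ZMod 2, (∃ w ∈ W, dot2 r w ≠ 0) →
      ‖fcoset2 A 0 V r‖ ≤ ((2 : ℝ) ^ d)⁻¹ + ε := by
  intro r hr
  have hmem : ∀ p : (Fin d → ZMod 2) × W, (∑ i, p.1 i • x i) + (p.2 : Fin n → ZMod 2) ∈ V := by
    intro p
    rw [hV]
    refine Submodule.add_mem _ ?_ (Submodule.mem_sup_left p.2.2)
    exact Submodule.sum_mem _ fun i _ => Submodule.smul_mem _ _
      (Submodule.mem_sup_right (Submodule.subset_span ⟨i, rfl⟩))
  have key : ∀ (cc : Fin d → ZMod 2) (ww : W),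
      Submodule.Quotient.mk (p := W) ((∑ i, cc i • x i) + (ww : Fin n → ZMod 2))
      = ∑ i, cc i • Submodule.Quotient.mk (p := W) (x i) := by
    intro cc ww
    have hw : Submodule.Quotient.mk (p := W) (ww : Fin n → ZMod 2) = 0 :=
      (Submodule.Quotient.mk_eq_zero _).2 ww.2
    rw [Submodule.Quotient.mk_add, hw, add_zero,
      show Submodule.Quotient.mk (p := W) (∑ i, cc i • x i)
        = W.mkQ (∑ i, cc i • x i) from rfl, map_sum]
    exact Finset.sum_congr rfl fun i _ => W.mkQ.map_smul _ _
  have hbij : Function.Bijective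
      (fun p : (Fin d → ZMod 2) × W => (⟨_, hmem p⟩ : V)) := by
    constructor
    · rintro ⟨c, w⟩ ⟨c', w'⟩ h
      have h1 : (∑ i, c i • x i) + (w : Fin n → ZMod 2)
          = (∑ i, c' i • x i) + (w' : Fin n → ZMod 2) := congrArg Subtype.val h
      have h2 : ∑ i, c i • Submodule.Quotient.mk (p := W) (x i)
          = ∑ i, c' i • Submodule.Quotient.mk (p := W) (x i) := by
        rw [← key c w, ← key c' w', h1]
      have h3 : ∑ i, (c - c') i • (fun i => Submodule.Quotient.mk (p := W) (x i)) i = 0 := by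
        simp only [Pi.sub_apply, sub_smul, Finset.sum_sub_distrib]
        rw [sub_eq_zero]; exact h2
      have h4 := Fintype.linearIndependent_iff.1 hx (c - c') h3
      have hcc : c = c' := by
        funext i; have hi := h4 i; simpa [sub_eq_zero] using hi
      subst hcc
      have hww : (w : Fin n → ZMod 2) = w' := add_left_cancel h1
      exact Prod.ext rfl (Subtype.ext hww)
    · rintro ⟨v, hv⟩
      rw [hV, Submodule.mem_sup] at hv
      obtain ⟨y, hy, z, hz, rfl⟩ := hv
      rw [Submodule.mem_span_range_iff_exists_fun] at hz
      obtain ⟨c, hc⟩ := hz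
      refine ⟨⟨c, ⟨y, hy⟩⟩, Subtype.ext ?_⟩
      show (∑ i, c i • x i) + y = y + z
      rw [hc]
      exact add_comm z y
  -- cardinality
  have hcardV : (Fintype.card V : ℂ) = (2:ℂ)^d * (Fintype.card W : ℂ) := by
    have := Fintype.card_of_bijective hbij
    rw [← this]
    push_cast [Fintype.card_prod, Fintype.card_fun]
    simp [ZMod.card]
  -- decomposition
  have hdecomp : fcoset2 A 0 V r
      = (∑ c : Fin d → ZMod 2, fcoset2 A (∑ i, c i • x i) W r) / (2:ℂ)^d := by
    rw [fcoset2]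
    have hsum : (∑ v : V, if (0:Fin n → ZMod 2) + (v : Fin n → ZMod 2) ∈ A then
        chi2 (dot2 r ((0:Fin n → ZMod 2) + (v : Fin n → ZMod 2))) else 0)
        = ∑ c : Fin d → ZMod 2, ∑ w : W,
          (if (∑ i, c i • x i) + (w : Fin n → ZMod 2) ∈ A then
            chi2 (dot2 r ((∑ i, c i • x i) + (w : Fin n → ZMod 2))) else 0) := by
      calc (∑ v : V, if (0:Fin n → ZMod 2) + (v : Fin n → ZMod 2) ∈ A then
              chi2 (dot2 r ((0:Fin n → ZMod 2) + (v : Fin n → ZMod 2))) else 0)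
          = ∑ p : (Fin d → ZMod 2) × W,
            (if (∑ i, p.1 i • x i) + (p.2 : Fin n → ZMod 2) ∈ A then
              chi2 (dot2 r ((∑ i, p.1 i • x i) + (p.2 : Fin n → ZMod 2))) else 0) :=
            (Fintype.sum_bijective _ hbij _ _ (fun p => by simp)).symm
        _ = _ := Fintype.sum_prod_type _
    rw [hsum, hcardV]
    simp only [fcoset2]
    rw [Finset.sum_div, Finset.sum_div]
    congr 1
    ext c
    rw [div_div, mul_comm ((2:ℂ)^d)]
  rw [hdecomp]
  have hp : (0:ℝ) < (2:ℝ)^d := by positivity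
  have h1 : (1:ℝ) ≤ (2:ℝ)^d := one_le_pow₀ (by norm_num)
  rw [norm_div]
  have habs2 : ‖((2:ℂ)^d)‖ = (2:ℝ)^d := by
    rw [norm_pow]; norm_num
  rw [habs2, div_le_iff₀ hp]
  have hsum_le : (∑ c : Fin d → ZMod 2,
      ‖(fcoset2 A (∑ i, c i • x i) W r)‖) ≤ 1 + ((2:ℝ)^d - 1) * ε := by
    have hsplit := (Finset.add_sum_erase Finset.univ
      (fun c : Fin d → ZMod 2 => ‖(fcoset2 A (∑ i, c i • x i) W r)‖)
      (Finset.mem_univ 0)).symm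
    rw [hsplit]
    have t0 : ‖(fcoset2 A (∑ i, (0 : Fin d → ZMod 2) i • x i) W r)‖ ≤ 1 :=
      abs_fcoset2_le_one _ _ _ _
    have trest : (∑ c ∈ Finset.univ.erase (0 : Fin d → ZMod 2),
        ‖(fcoset2 A (∑ i, c i • x i) W r)‖) ≤ ((2:ℝ)^d - 1) * ε := by
      have hcard : ((Finset.univ.erase (0 : Fin d → ZMod 2)).card : ℝ) = (2:ℝ)^d - 1 := by
        rw [Finset.card_erase_of_mem (Finset.mem_univ _), Finset.card_univ]
        have : Fintype.card (Fin d → ZMod 2) = 2^d := by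
          simp [Fintype.card_fun, ZMod.card]
        rw [this]
        push_cast [Nat.cast_sub (Nat.one_le_two_pow)]
        norm_num
      calc (∑ c ∈ Finset.univ.erase (0 : Fin d → ZMod 2),
            ‖(fcoset2 A (∑ i, c i • x i) W r)‖)
          ≤ ∑ _c ∈ Finset.univ.erase (0 : Fin d → ZMod 2), ε := by
            refine Finset.sum_le_sum fun c hc => ?_
            have hc0 : c ≠ 0 := Finset.ne_of_mem_erase hc
            set I : Finset (Fin d) := Finset.univ.filter (fun i => c i = 1) with hI
            have hIne : I.Nonempty := by
              obtain ⟨i, hi⟩ := Function.ne_iff.1 hc0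
              refine ⟨i, ?_⟩
              rw [hI, Finset.mem_filter]
              refine ⟨Finset.mem_univ _, ?_⟩
              have : ∀ t : ZMod 2, t ≠ 0 → t = 1 := by decide
              exact this _ hi
            have hxI : ∑ i, c i • x i = ∑ i ∈ I, x i := by
              rw [hI, Finset.sum_filter]
              refine Finset.sum_congr rfl fun i _ => ?_
              have : ∀ t : ZMod 2, t = 0 ∨ t = 1 := by decide
              rcases this (c i) with h | h <;> simp [h]
            rw [hxI]
            exact hunif I hIne r hr
        _ = ((2:ℝ)^d - 1) * ε := by
            rw [Finset.sum_const, nsmul_eq_mul, hcard]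
    linarith
  calc ‖(∑ c : Fin d → ZMod 2, fcoset2 A (∑ i, c i • x i) W r)‖
      ≤ ∑ c : Fin d → ZMod 2, ‖(fcoset2 A (∑ i, c i • x i) W r)‖ :=
        norm_sum_le _ _
    _ ≤ 1 + ((2:ℝ)^d - 1) * ε := hsum_le
    _ ≤ (((2:ℝ)^d)⁻¹ + ε) * (2:ℝ)^d := by
        rw [add_mul, inv_mul_cancel₀ (ne_of_gt hp)]
        nlinarith
end
end
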